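/- The distance-query heuristic of Algorithm 1 is correct: let ω ∈ ℕ, let P be a finite set of points of the grid {0,…,2^ω−1}², let q ∈ ℝ² and δ > 0, let Q be any axis-aligned square of grid points containing all grid points within Euclidean distance δ of q, let k ≤ ω satisfy 2^k ≥ side length of Q, and let C_1,…,C_μ (μ ≤ 4) be the level-k dyadic cells intersecting Q, with corners (a_i,b_i). Then ⋃_{i=1}^{μ} { p ∈ P : morton_ω(a_i,b_i) ≤ morton_ω(p) < morton_ω(a_i,b_i) + 4^k and ‖p − q‖₂ < δ } = { p ∈ P : ‖p − q‖₂ < δ }. -/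

import Mathlib

/-- The Morton (Z-order) encoding of a pair of `ω`-bit numbers, obtained by
interleaving binary digits: `morton ω x y = Σ_{i<ω} (bitᵢ(x)·2^{2i+1} + bitᵢ(y)·2^{2i})`. -/
def morton (ω : ℕ) (x y : ℕ) : ℕ :=
  ∑ i ∈ Finset.range ω,
    ((Nat.testBit x i).toNat * 2 ^ (2 * i + 1) + (Nat.testBit y i).toNat * 2 ^ (2 * i))

lemma morton_low_lt (k x y : ℕ) :
    ∑ i ∈ Finset.range k,
      ((Nat.testBit x i).toNat * 2 ^ (2 * i + 1) + (Nat.testBit y i).toNat * 2 ^ (2 * i))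
      < 4 ^ k := by
  induction k with
  | zero => simp
  | succ k ih =>
    rw [Finset.sum_range_succ]
    have h1 : (Nat.testBit x k).toNat ≤ 1 := Bool.toNat_le _
    have h2 : (Nat.testBit y k).toNat ≤ 1 := Bool.toNat_le _
    have e2 : 2 ^ (2 * k) = 4 ^ k := by rw [pow_mul]; norm_num
    have e1 : 2 ^ (2 * k + 1) = 2 * 4 ^ k := by rw [pow_succ, e2]; ring
    have e3 : 4 ^ (k + 1) = 4 * 4 ^ k := by ring
    have b1 : (Nat.testBit x k).toNat * 2 ^ (2 * k + 1) ≤ 2 * 4 ^ k := by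
      calc (Nat.testBit x k).toNat * 2 ^ (2 * k + 1) ≤ 1 * 2 ^ (2 * k + 1) :=
            Nat.mul_le_mul_right _ h1
        _ = 2 * 4 ^ k := by rw [one_mul, e1]
    have b2 : (Nat.testBit y k).toNat * 2 ^ (2 * k) ≤ 4 ^ k := by
      calc (Nat.testBit y k).toNat * 2 ^ (2 * k) ≤ 1 * 2 ^ (2 * k) :=
            Nat.mul_le_mul_right _ h2
        _ = 4 ^ k := by rw [one_mul, e2]
    rw [e3]
    linarith [ih, b1, b2]

lemma testBit_high {k : ℕ} (x : ℕ) {i : ℕ} (hi : k ≤ i) :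
    Nat.testBit (2 ^ k * (x / 2 ^ k)) i = Nat.testBit x i := by
  rw [Nat.testBit_two_pow_mul]
  have h : i - k + k = i := Nat.sub_add_cancel hi
  simp only [ge_iff_le, hi, decide_true, Bool.true_and]
  rw [← Nat.shiftRight_eq_div_pow, Nat.testBit_shiftRight, Nat.add_comm, h]

lemma testBit_low {k m i : ℕ} (hi : i < k) :
    Nat.testBit (2 ^ k * m) i = false := by
  rw [Nat.testBit_two_pow_mul]
  simp [Nat.not_le.mpr hi]

/-- Key lemma: Morton code decomposition for a point in the cell with corner
`(2^k*(x/2^k), 2^k*(y/2^k))`. -/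
lemma morton_cell_bounds {ω k : ℕ} (hk : k ≤ ω) (x y : ℕ) :
    morton ω (2 ^ k * (x / 2 ^ k)) (2 ^ k * (y / 2 ^ k)) ≤ morton ω x y ∧
    morton ω x y < morton ω (2 ^ k * (x / 2 ^ k)) (2 ^ k * (y / 2 ^ k)) + 4 ^ k := by
  set a := 2 ^ k * (x / 2 ^ k)
  set b := 2 ^ k * (y / 2 ^ k)
  have hsplit : ∀ z w : ℕ, morton ω z w =
      (∑ i ∈ Finset.range k,
        ((Nat.testBit z i).toNat * 2 ^ (2 * i + 1) + (Nat.testBit w i).toNat * 2 ^ (2 * i))) +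
      ∑ i ∈ Finset.Ico k ω,
        ((Nat.testBit z i).toNat * 2 ^ (2 * i + 1) + (Nat.testBit w i).toNat * 2 ^ (2 * i)) := by
    intro z w
    rw [morton, Finset.range_eq_Ico, ← Finset.sum_Ico_consecutive _ (Nat.zero_le k) hk, Finset.range_eq_Ico]
  have hhigh : ∑ i ∈ Finset.Ico k ω,
        ((Nat.testBit a i).toNat * 2 ^ (2 * i + 1) + (Nat.testBit b i).toNat * 2 ^ (2 * i)) =
      ∑ i ∈ Finset.Ico k ω,
        ((Nat.testBit x i).toNat * 2 ^ (2 * i + 1) + (Nat.testBit y i).toNat * 2 ^ (2 * i)) := by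
    apply Finset.sum_congr rfl
    intro i hi
    rw [Finset.mem_Ico] at hi
    rw [testBit_high x hi.1, testBit_high y hi.1]
  have hlowa : ∑ i ∈ Finset.range k,
      ((Nat.testBit a i).toNat * 2 ^ (2 * i + 1) + (Nat.testBit b i).toNat * 2 ^ (2 * i)) = 0 := by
    apply Finset.sum_eq_zero
    intro i hi
    rw [Finset.mem_range] at hi
    rw [testBit_low hi, testBit_low hi]
    simp
  have hx := hsplit x y
  have ha := hsplit a b
  rw [hlowa, hhigh, zero_add] at ha
  have hlt := morton_low_lt k x y
  constructor
  · rw [hx, ha]; omega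
  · rw [hx, ha]; omega

/-- Correctness of the distance-query heuristic of Algorithm 1: let `P` be a finite
set of points of the grid `{0,…,2^ω−1}²`, `q ∈ ℝ²`, `δ > 0`, and let
`Q = {qa,…,qa+qs−1} × {qb,…,qb+qs−1}` be an axis-aligned square of grid points
containing all grid points within Euclidean distance `δ` of `q`.  Let `k ≤ ω`
satisfy `2^k ≥ qs`.  Then the union, over the corners `c` of the level-`k` dyadic
cells intersecting `Q`, of the sets
`{p ∈ P : morton ω c ≤ morton ω p < morton ω c + 4^k and ‖p − q‖₂ < δ}`
is exactly `{p ∈ P : ‖p − q‖₂ < δ}`. -/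
theorem distance_query_correct (ω k : ℕ) (hk : k ≤ ω) (P : Finset (ℕ × ℕ))
    (hP : ∀ p ∈ P, p.1 < 2 ^ ω ∧ p.2 < 2 ^ ω)
    (q : ℝ × ℝ) (δ : ℝ) (hδ : 0 < δ)
    (qa qb qs : ℕ) (hQa : qa + qs ≤ 2 ^ ω) (hQb : qb + qs ≤ 2 ^ ω)
    (hqs : qs ≤ 2 ^ k)
    (hQ : ∀ p : ℕ × ℕ, p.1 < 2 ^ ω → p.2 < 2 ^ ω →
      Real.sqrt (((p.1 : ℝ) - q.1) ^ 2 + ((p.2 : ℝ) - q.2) ^ 2) ≤ δ →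
      qa ≤ p.1 ∧ p.1 < qa + qs ∧ qb ≤ p.2 ∧ p.2 < qb + qs) :
    (⋃ c ∈ {c : ℕ × ℕ | c.1 < 2 ^ ω ∧ c.2 < 2 ^ ω ∧ 2 ^ k ∣ c.1 ∧ 2 ^ k ∣ c.2 ∧
        ∃ p : ℕ × ℕ, (c.1 ≤ p.1 ∧ p.1 < c.1 + 2 ^ k ∧ c.2 ≤ p.2 ∧ p.2 < c.2 + 2 ^ k) ∧
          (qa ≤ p.1 ∧ p.1 < qa + qs ∧ qb ≤ p.2 ∧ p.2 < qb + qs)},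
      {p : ℕ × ℕ | p ∈ P ∧
        morton ω c.1 c.2 ≤ morton ω p.1 p.2 ∧
        morton ω p.1 p.2 < morton ω c.1 c.2 + 4 ^ k ∧
        Real.sqrt (((p.1 : ℝ) - q.1) ^ 2 + ((p.2 : ℝ) - q.2) ^ 2) < δ}) =
    {p : ℕ × ℕ | p ∈ P ∧
      Real.sqrt (((p.1 : ℝ) - q.1) ^ 2 + ((p.2 : ℝ) - q.2) ^ 2) < δ} := by
  ext p
  simp only [Set.mem_iUnion, Set.mem_setOf_eq]
  constructor
  · rintro ⟨c, _, hp, _, _, hd⟩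
    exact ⟨hp, hd⟩
  · rintro ⟨hp, hd⟩
    obtain ⟨hp1, hp2⟩ := hP p hp
    have hin := hQ p hp1 hp2 (le_of_lt hd)
    set a := 2 ^ k * (p.1 / 2 ^ k) with ha
    set b := 2 ^ k * (p.2 / 2 ^ k) with hb
    have hax : a ≤ p.1 := Nat.mul_div_le _ _
    have hbx : b ≤ p.2 := Nat.mul_div_le _ _
    have hax2 : p.1 < a + 2 ^ k := by
      have h1 := Nat.div_add_mod p.1 (2 ^ k)
      have h2 := Nat.mod_lt p.1 (Nat.pow_pos (n := k) (by norm_num) : 0 < 2 ^ k)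
      omega
    have hbx2 : p.2 < b + 2 ^ k := by
      have h1 := Nat.div_add_mod p.2 (2 ^ k)
      have h2 := Nat.mod_lt p.2 (Nat.pow_pos (n := k) (by norm_num) : 0 < 2 ^ k)
      omega
    obtain ⟨hm1, hm2⟩ := morton_cell_bounds hk p.1 p.2
    refine ⟨(a, b), ⟨?_, ?_, ⟨_, rfl⟩, ⟨_, rfl⟩, p, ⟨hax, hax2, hbx, hbx2⟩, hin⟩,
      hp, hm1, hm2, hd⟩
    · exact lt_of_le_of_lt hax hp1
    · exact lt_of_le_of_lt hbx hp2
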